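/- Let 𝒞 be a category with a subcategory W containing all objects, and suppose 𝒞 admits a functorial factorization of every morphism as a morphism in a subcategory C followed by a morphism in W, such that the factorization is natural. If D ⊆ 𝒞 is the subcategory with morphisms in C and E ⊆ 𝒞 is the subcategory with morphisms factoring appropriately, and the functorial factorization induces functors in both directions between the categories w(𝒞^[k]_R) and w(𝒞^[k]) together with natural weak equivalences to the identities, then the inclusion N w(𝒞^[k]_R) → N w(𝒞^[k]) is a simplicial homotopy equivalence of nerves. -/

import Mathlib

open CategoryTheory Simplicial CategoryTheory.Limits

universe u

noncomputable section

/-- The map `X ⟶ Δ[1]` constant at the vertex `k`. -/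
def constMap (X : SSet) (k : Fin 2) : X ⟶ Δ[1] where
  app m := TypeCat.ofHom (fun _ => SSet.stdSimplex.const 1 k m)
  naturality := by intros; rfl

/-- The endpoint inclusion `X ⟶ X ⨯ Δ[1]` at the vertex `k`. -/
def endpt (X : SSet.{u}) (k : Fin 2) : X ⟶ X ⨯ Δ[1] :=
  prod.lift (𝟙 X) (constMap X k)

/-- Two maps of simplicial sets are related by an elementary homotopy if there is a map
`X ⨯ Δ[1] ⟶ Y` restricting to them on the two endpoints. -/
def HomotopicOne {X Y : SSet.{u}} (f g : X ⟶ Y) : Prop :=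
  ∃ H : X ⨯ Δ[1] ⟶ Y, endpt X 0 ≫ H = f ∧ endpt X 1 ≫ H = g

/-- Simplicial homotopy: the equivalence relation generated by elementary homotopies. -/
def SHomotopic {X Y : SSet} (f g : X ⟶ Y) : Prop :=
  Relation.EqvGen HomotopicOne f g

/-- A map of simplicial sets is a (simplicial) homotopy equivalence if it admits a
homotopy inverse. -/
def IsSHomotopyEquiv {X Y : SSet} (f : X ⟶ Y) : Prop :=
  ∃ g : Y ⟶ X, SHomotopic (f ≫ g) (𝟙 X) ∧ SHomotopic (g ≫ f) (𝟙 Y)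

/-- Two simplicial sets are homotopy equivalent. -/
def SHomotopyEquivalent (X Y : SSet) : Prop :=
  ∃ f : X ⟶ Y, IsSHomotopyEquiv f

section Aux

variable {A B : Type u} [SmallCategory A] [SmallCategory B]

/-- object part of the cylinder functor -/
def cylObj (F G : A ⥤ B) (p : A × Fin 2) : B :=
  match p with
  | (a, 0) => F.obj a
  | (a, 1) => G.obj a

/-- morphism part of the cylinder functor -/
def cylMap {F G : A ⥤ B} (γ : F ⟶ G) :
    ∀ {p q : A × Fin 2}, (p ⟶ q) → (cylObj F G p ⟶ cylObj F G q) :=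
  fun {p q} φ =>
  match p, q, φ with
  | (_, 0), (_, 0), (f, _) => F.map f
  | (_, 0), (b, 1), (f, _) => F.map f ≫ γ.app b
  | (_, 1), (_, 1), (f, _) => G.map f
  | (_, 1), (_, 0), (_, h) => (Nat.not_succ_le_zero _ h.down.down).elim

/-- The cylinder functor associated with a natural transformation. -/
def cyl {F G : A ⥤ B} (γ : F ⟶ G) : A × Fin 2 ⥤ B where
  obj := cylObj F G
  map := cylMap γ
  map_id p := by
    obtain ⟨a, i⟩ := p
    fin_cases i <;> simp [cylMap] <;> rfl
  map_comp {p q r} f g := by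
    obtain ⟨a, i⟩ := p; obtain ⟨b, j⟩ := q; obtain ⟨c, k⟩ := r
    fin_cases i <;> fin_cases j <;> fin_cases k <;>
      first
      | exact (Nat.not_succ_le_zero _ f.2.down.down).elim
      | exact (Nat.not_succ_le_zero _ g.2.down.down).elim
      | (obtain ⟨f1, f2⟩ := f; obtain ⟨g1, g2⟩ := g; simp [cylMap, cylObj])

/-- The components of the simcom homotopy. -/
def cylHomApp {F G : A ⥤ B} (γ : F ⟶ G) (Δ : SimplexCategoryᵒᵖ)
    (x : (MonoidalCategory.tensorObj (nerve A) Δ[1]).obj Δ) : (nerve B).obj Δ :=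
  (x.1.prod' (x.2.down.toOrderHom.monotone.functor)) ⋙ cyl γ

/-- The homotopy associated with a natural transformation, at the tensor level. -/
def cylHom {F G : A ⥤ B} (γ : F ⟶ G) :
    MonoidalCategory.tensorObj (nerve A) Δ[1] ⟶ nerve B where
  app Δ := TypeCat.ofHom (cylHomApp γ Δ)
  naturality _ _ _ := rfl

/-- Comparison map from the categorical product to the chosen tensor product. -/
def prodToTensor (X Y : SSet.{u}) : (X ⨯ Y : SSet) ⟶ MonoidalCategory.tensorObj X Y :=
  CartesianMonoidalCategory.lift prod.fst prod.snd

lemma endpt_prodToTensor (X : SSet.{u}) (k : Fin 2) :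
    endpt X k ≫ prodToTensor X Δ[1] =
      CartesianMonoidalCategory.lift (𝟙 X) (constMap X k) := by
  apply CartesianMonoidalCategory.hom_ext <;>
    simp [endpt, prodToTensor] <;> exact limit.lift_π _ _

lemma nerve_homotopicOne {F G : A ⥤ B} (γ : F ⟶ G) :
    HomotopicOne (nerveFunctor.{u, u}.map (show Cat.of A ⟶ Cat.of B from F.toCatHom))
      (nerveFunctor.{u, u}.map (show Cat.of A ⟶ Cat.of B from G.toCatHom)) := by
  refine ⟨prodToTensor (nerve A) Δ[1] ≫ cylHom γ, ?_, ?_⟩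
  · show endpt (nerve A) 0 ≫ prodToTensor (nerve A) Δ[1] ≫ cylHom γ = _
    rw [← Category.assoc, endpt_prodToTensor]; rfl
  · show endpt (nerve A) 1 ≫ prodToTensor (nerve A) Δ[1] ≫ cylHom γ = _
    rw [← Category.assoc, endpt_prodToTensor]; rfl

lemma nerve_shomotopic {F G : A ⥤ B} (γ : F ⟶ G) :
    SHomotopic (nerveFunctor.{u, u}.map (show Cat.of A ⟶ Cat.of B from F.toCatHom))
      (nerveFunctor.{u, u}.map (show Cat.of A ⟶ Cat.of B from G.toCatHom)) :=
  Relation.EqvGen.rel _ _ (nerve_homotopicOne γ)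

end Aux

/-- Abstract form of the lemma: let `A = w(𝒞^[k]_R)` be the (full) subcategory of Reedy
cofibrant diagrams inside `B = w(𝒞^[k])`, with inclusion `i`. If the functorial factorization
induces a functor `r` in the opposite direction together with natural (weak equivalence)
transformations connecting both composites with the identities, then the inclusion
`N w(𝒞^[k]_R) → N w(𝒞^[k])` is a simplicial homotopy equivalence of nerves. -/
theorem nerve_inclusion_homotopy_equivalence {A B : Type u}
    [SmallCategory A] [SmallCategory B] (i : A ⥤ B) (hfull : i.Full) (hfaithful : i.Faithful)
    (r : B ⥤ A) (α : i ⋙ r ⟶ 𝟭 A) (β : r ⋙ i ⟶ 𝟭 B) :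
    IsSHomotopyEquiv (nerveFunctor.{u, u}.map (show Cat.of A ⟶ Cat.of B from i.toCatHom)) := by
  exact ⟨nerveFunctor.{u, u}.map (show Cat.of B ⟶ Cat.of A from r.toCatHom),
    nerve_shomotopic (F := i ⋙ r) (G := 𝟭 A) α,
    nerve_shomotopic (F := r ⋙ i) (G := 𝟭 B) β⟩
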